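/- Let Q₁, Q₂, E₁, E₂ : (-∞, Λ₀) → ℝ be C¹ functions with Λ₀ < 0, satisfying E_i'(Λ) = Λ·Q_i'(Λ) for i = 1,2, and such that |Λ|·|Q₂(Λ) - Q₁(Λ)| → 0 and |E₂(Λ) - E₁(Λ)| → 0 as Λ → -∞. If Q₁(Λ) < Q₂(Λ) for every Λ < Λ₀, then E₁(Λ) > E₂(Λ) for every Λ < Λ₀. -/

import Mathlib

open Filter

/-- Comparison lemma: if two C¹ branches satisfy `Eᵢ' = Λ·Qᵢ'`, the mass and energy
differences vanish (suitably weighted) as `Λ → -∞`, and `Q₁ < Q₂` on `(-∞, Λ₀)`,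
then `E₁ > E₂` on `(-∞, Λ₀)`. -/
theorem stmt_6 (Λ₀ : ℝ) (hΛ₀ : Λ₀ < 0)
    (Q₁ Q₂ E₁ E₂ Q₁' Q₂' : ℝ → ℝ)
    (hQ₁ : ∀ Λ < Λ₀, HasDerivAt Q₁ (Q₁' Λ) Λ)
    (hQ₂ : ∀ Λ < Λ₀, HasDerivAt Q₂ (Q₂' Λ) Λ)
    (hQ₁c : ContinuousOn Q₁' (Set.Iio Λ₀))
    (hQ₂c : ContinuousOn Q₂' (Set.Iio Λ₀))
    (hE₁ : ∀ Λ < Λ₀, HasDerivAt E₁ (Λ * Q₁' Λ) Λ)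
    (hE₂ : ∀ Λ < Λ₀, HasDerivAt E₂ (Λ * Q₂' Λ) Λ)
    (hQlim : Tendsto (fun Λ => |Λ| * |Q₂ Λ - Q₁ Λ|) atBot (nhds 0))
    (hElim : Tendsto (fun Λ => |E₂ Λ - E₁ Λ|) atBot (nhds 0))
    (hQlt : ∀ Λ < Λ₀, Q₁ Λ < Q₂ Λ) :
    ∀ Λ < Λ₀, E₂ Λ < E₁ Λ := by
  set H : ℝ → ℝ := fun Λ => (E₂ Λ - E₁ Λ) - Λ * (Q₂ Λ - Q₁ Λ) with hH
  have hHd : ∀ Λ ∈ Set.Iio Λ₀, HasDerivAt H (-(Q₂ Λ - Q₁ Λ)) Λ := by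
    intro Λ hΛ
    have h1 := ((hE₂ Λ hΛ).sub (hE₁ Λ hΛ)).sub
      (((hasDerivAt_id Λ).mul ((hQ₂ Λ hΛ).sub (hQ₁ Λ hΛ))))
    refine h1.congr_deriv ?_
    simp only [id, Pi.sub_apply]
    ring
  -- H is strictly antitone on Iio Λ₀
  have hanti : StrictAntiOn H (Set.Iio Λ₀) := by
    apply StrictAntiOn.mono (s := Set.Iio Λ₀) ?_ le_rfl
    apply strictAntiOn_of_hasDerivWithinAt_neg (convex_Iio Λ₀)
      (f' := fun Λ => -(Q₂ Λ - Q₁ Λ))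
    · intro x hx
      exact (hHd x hx).continuousAt.continuousWithinAt
    · intro x hx
      rw [interior_Iio] at hx
      exact (hHd x hx).hasDerivWithinAt
    · intro x hx
      rw [interior_Iio] at hx
      simp only [neg_neg, neg_sub, sub_neg]
      exact hQlt x hx
  -- H tends to 0 at -∞
  have hF : Tendsto (fun Λ => E₂ Λ - E₁ Λ) atBot (nhds 0) :=
    tendsto_zero_iff_abs_tendsto_zero _ |>.mpr hElim
  have hG : Tendsto (fun Λ => Λ * (Q₂ Λ - Q₁ Λ)) atBot (nhds 0) := by
    rw [tendsto_zero_iff_abs_tendsto_zero]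
    have : (abs ∘ fun Λ => Λ * (Q₂ Λ - Q₁ Λ)) = fun Λ => |Λ| * |Q₂ Λ - Q₁ Λ| := by
      funext x; simp [abs_mul]
    rw [this]; exact hQlim
  have hHlim : Tendsto H atBot (nhds 0) := by
    simpa using hF.sub hG
  -- H ≤ 0 on Iio Λ₀
  have hHle : ∀ Λ < Λ₀, H Λ ≤ 0 := by
    intro Λ hΛ
    refine ge_of_tendsto hHlim ?_
    filter_upwards [eventually_lt_atBot Λ] with x hx
    exact le_of_lt (hanti (hx.trans hΛ) hΛ hx)
  intro Λ hΛ
  have h1 : H Λ ≤ 0 := hHle Λ hΛ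
  have h2 : Λ * (Q₂ Λ - Q₁ Λ) < 0 :=
    mul_neg_of_neg_of_pos (hΛ.trans hΛ₀) (sub_pos.mpr (hQlt Λ hΛ))
  have : E₂ Λ - E₁ Λ < 0 := by
    have := add_lt_add_of_le_of_lt h1 h2
    simpa [hH] using this
  linarith
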